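/- Let ν be a multiplicative arithmetic function whose support has positive asymptotic density, and let f, g be arithmetic functions with g = f * ν (Dirichlet convolution), not both identically zero. Then supp(f) and supp(g) cannot both be thin. -/

import Mathlib

open Filter Topology ArithmeticFunction

/-- Number of elements of `A` in `[1, N]`. -/
noncomputable def cnt (A : Set ℕ) (N : ℕ) : ℕ := (A ∩ Set.Icc 1 N).ncard

/-- `A ⊆ ℕ` has asymptotic density `d`. -/
def HasDensity (A : Set ℕ) (d : ℝ) : Prop :=
  Filter.Tendsto (fun N : ℕ => (cnt A N : ℝ) / N) Filter.atTop (nhds d)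

/-- `A` is thin: the sum of the reciprocals of its elements converges. -/
def Thin (A : Set ℕ) : Prop := Summable (fun a : A => (1 : ℝ) / a)


/-- reciprocal indicator -/
noncomputable def recip (X : Set ℕ) : ℕ → ℝ := X.indicator (fun n => (n : ℝ)⁻¹)

lemma recip_nonneg (X : Set ℕ) (n : ℕ) : 0 ≤ recip X n :=
  Set.indicator_nonneg (fun n _ => by positivity) n

lemma recip_of_mem {X : Set ℕ} {n : ℕ} (h : n ∈ X) : recip X n = (n : ℝ)⁻¹ :=
  Set.indicator_of_mem h _

lemma recip_of_not_mem {X : Set ℕ} {n : ℕ} (h : n ∉ X) : recip X n = 0 :=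
  Set.indicator_of_notMem h _

lemma recip_mono {X Y : Set ℕ} (h : X ⊆ Y) (n : ℕ) : recip X n ≤ recip Y n := by
  by_cases hn : n ∈ X
  · rw [recip_of_mem hn, recip_of_mem (h hn)]
  · rw [recip_of_not_mem hn]; exact recip_nonneg _ _

/-- partial sums of reciprocals over `[1, N]` -/
noncomputable def LS (X : Set ℕ) (N : ℕ) : ℝ := ∑ n ∈ Finset.Icc 1 N, recip X n

lemma LS_nonneg (X : Set ℕ) (N : ℕ) : 0 ≤ LS X N :=
  Finset.sum_nonneg fun n _ => recip_nonneg X n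

lemma thin_summable {X : Set ℕ} (hX : Thin X) : Summable (recip X) := by
  rw [recip, ← summable_subtype_iff_indicator]
  refine hX.congr fun a => ?_
  simp [one_div]

lemma LS_le_tsum {X : Set ℕ} (h : Summable (recip X)) (N : ℕ) :
    LS X N ≤ ∑' n, recip X n :=
  Summable.sum_le_tsum _ (fun n _ => recip_nonneg X n) h

lemma summable_of_LS_bounded {X : Set ℕ} (h0 : (0 : ℕ) ∉ X) {C : ℝ}
    (h : ∀ N, LS X N ≤ C) : Summable (recip X) := by
  apply summable_of_sum_range_le (fun n => recip_nonneg X n)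
  intro n
  calc ∑ i ∈ Finset.range n, recip X i ≤ ∑ i ∈ insert 0 (Finset.Icc 1 n), recip X i := by
        apply Finset.sum_le_sum_of_subset_of_nonneg
        · intro i hi
          rcases Nat.eq_zero_or_pos i with h' | h'
          · simp [h']
          · simp only [Finset.mem_insert, Finset.mem_Icc]
            exact Or.inr ⟨h', le_of_lt (Finset.mem_range.mp hi)⟩
        · exact fun i _ _ => recip_nonneg X i
    _ = LS X n := by
        rw [Finset.sum_insert (by simp), recip_of_not_mem h0, zero_add, LS]
    _ ≤ C := h n

open Classical in
lemma cnt_eq_card (S : Set ℕ) (N : ℕ) :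
    cnt S N = ((Finset.Icc 1 N).filter (· ∈ S)).card := by
  rw [cnt]
  rw [show S ∩ Set.Icc 1 N = ((Finset.Icc 1 N).filter (· ∈ S) : Finset ℕ) by
    ext n; simp only [Set.mem_inter_iff, Set.mem_Icc, Finset.coe_filter, Finset.mem_Icc,
      Set.mem_setOf_eq]; tauto]
  exact Set.ncard_coe_finset _

open Classical in
lemma card_le_sum_mul {S : Set ℕ} {a b : ℕ} (ha : 1 ≤ a) (hb : 1 ≤ b) :
    (((Finset.Icc a b).filter (· ∈ S)).card : ℝ) ≤ b * ∑ n ∈ Finset.Icc a b, recip S n := by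
  have : ∑ n ∈ (Finset.Icc a b).filter (· ∈ S), (b : ℝ)⁻¹ ≤ ∑ n ∈ Finset.Icc a b, recip S n := by
    rw [← Finset.sum_filter_add_sum_filter_not (Finset.Icc a b) (· ∈ S) (recip S)]
    have h1 : ∑ n ∈ (Finset.Icc a b).filter (· ∈ S), (b:ℝ)⁻¹ ≤
        ∑ n ∈ (Finset.Icc a b).filter (· ∈ S), recip S n := by
      apply Finset.sum_le_sum
      intro n hn
      simp only [Finset.mem_filter, Finset.mem_Icc] at hn
      rw [recip_of_mem hn.2]
      have hn1 : 1 ≤ n := le_trans ha hn.1.1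
      apply inv_anti₀
      · exact_mod_cast hn1
      · exact_mod_cast hn.1.2
    have h2 : (0:ℝ) ≤ ∑ n ∈ (Finset.Icc a b).filter (¬ · ∈ S), recip S n :=
      Finset.sum_nonneg fun n _ => recip_nonneg S n
    linarith
  rw [Finset.sum_const, nsmul_eq_mul] at this
  have hb' : (0:ℝ) < b := by exact_mod_cast hb
  calc (((Finset.Icc a b).filter (· ∈ S)).card : ℝ)
      = b * (((Finset.Icc a b).filter (· ∈ S)).card * (b:ℝ)⁻¹) := by
        field_simp
    _ ≤ b * ∑ n ∈ Finset.Icc a b, recip S n := by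
        apply mul_le_mul_of_nonneg_left this (le_of_lt hb')

lemma LS_tendsto {S : Set ℕ} (h0 : (0:ℕ) ∉ S) (hsum : Summable (recip S)) :
    Filter.Tendsto (fun Y => LS S Y) Filter.atTop (nhds (∑' n, recip S n)) := by
  have h1 : Filter.Tendsto (fun Y : ℕ => ∑ n ∈ Finset.range Y, recip S n)
      Filter.atTop (nhds (∑' n, recip S n)) := hsum.hasSum.tendsto_sum_nat
  have h2 := h1.comp (Filter.tendsto_add_atTop_nat 1)
  refine h2.congr fun Y => ?_
  simp only [Function.comp]
  rw [Finset.range_eq_Ico, show Y + 1 = Y + 1 by rfl]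
  rw [show Finset.Ico 0 (Y+1) = insert 0 (Finset.Icc 1 Y) by
    ext n; simp [Finset.mem_Ico, Finset.mem_Icc]; omega]
  rw [Finset.sum_insert (by simp), recip_of_not_mem h0, zero_add, LS]

open Classical in
lemma not_summable_recip_of_density {S : Set ℕ} (h0 : (0:ℕ) ∉ S) {d : ℝ} (hd : 0 < d)
    (hD : HasDensity S d) : ¬ Summable (recip S) := by
  intro hsum
  set q := ∑' n, recip S n with hq
  have htd := LS_tendsto h0 hsum
  have : ∀ᶠ Y in Filter.atTop, q - LS S Y < d / 2 := by
    have := htd.eventually (eventually_gt_nhds (show q - d/2 < q by linarith))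
    filter_upwards [this] with Y hY
    linarith
  obtain ⟨Y₀, hY₀⟩ := this.exists
  set c := q - LS S Y₀ with hc
  -- key bound for N ≥ Y₀ + 1
  have key : ∀ N : ℕ, Y₀ + 1 ≤ N → (cnt S N : ℝ) ≤ Y₀ + N * c := by
    intro N hN
    have hdisj : Disjoint (Finset.Icc 1 Y₀) (Finset.Icc (Y₀+1) N) := by
      rw [Finset.disjoint_left]; intro x hx hx'
      simp only [Finset.mem_Icc] at hx hx'; omega
    have hunion : Finset.Icc 1 Y₀ ∪ Finset.Icc (Y₀+1) N = Finset.Icc 1 N := by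
      ext x; simp only [Finset.mem_union, Finset.mem_Icc]; omega
    have hsum_split : LS S Y₀ + ∑ n ∈ Finset.Icc (Y₀+1) N, recip S n = LS S N := by
      rw [LS, LS, ← Finset.sum_union hdisj, hunion]
    have hLSq : LS S N ≤ q := LS_le_tsum hsum N
    have htail : ∑ n ∈ Finset.Icc (Y₀+1) N, recip S n ≤ c := by
      rw [hc]; linarith
    have hcard : cnt S N ≤ ((Finset.Icc 1 Y₀).filter (· ∈ S)).card
        + ((Finset.Icc (Y₀+1) N).filter (· ∈ S)).card := by
      rw [cnt_eq_card, ← hunion, Finset.filter_union]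
      exact Finset.card_union_le _ _
    have h1 : (((Finset.Icc 1 Y₀).filter (· ∈ S)).card : ℝ) ≤ Y₀ := by
      have := Finset.card_filter_le (Finset.Icc 1 Y₀) (· ∈ S)
      have h2 := Nat.card_Icc 1 Y₀
      have : ((Finset.Icc 1 Y₀).filter (· ∈ S)).card ≤ Y₀ := by omega
      exact_mod_cast this
    have h2 : (((Finset.Icc (Y₀+1) N).filter (· ∈ S)).card : ℝ) ≤ N * c := by
      calc (((Finset.Icc (Y₀+1) N).filter (· ∈ S)).card : ℝ)
          ≤ N * ∑ n ∈ Finset.Icc (Y₀+1) N, recip S n :=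
            card_le_sum_mul (by omega) (by omega)
        _ ≤ N * c := by
            apply mul_le_mul_of_nonneg_left htail
            positivity
    calc (cnt S N : ℝ) ≤ (((Finset.Icc 1 Y₀).filter (· ∈ S)).card : ℝ)
          + ((Finset.Icc (Y₀+1) N).filter (· ∈ S)).card := by exact_mod_cast hcard
      _ ≤ Y₀ + N * c := by linarith
  -- take limits
  have hlim2 : Filter.Tendsto (fun N : ℕ => (Y₀ : ℝ) / N + c) Filter.atTop (nhds c) := by
    have := tendsto_const_div_atTop_nhds_zero_nat (Y₀ : ℝ)
    simpa using this.add tendsto_const_nhds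
  have hle : d ≤ c := by
    apply le_of_tendsto_of_tendsto hD hlim2
    filter_upwards [Filter.eventually_ge_atTop (Y₀ + 1)] with N hN
    have hNpos : (0:ℝ) < N := by exact_mod_cast (by omega : 0 < N)
    rw [div_le_iff₀ hNpos]
    have := key N hN
    have hexp : ((Y₀:ℝ) / N + c) * N = Y₀ + N * c := by field_simp
    rw [hexp]
    exact this
  linarith

/-- the reciprocal monoid hom ℕ →* ℝ -/
noncomputable def recipHom : ℕ →* ℝ where
  toFun n := (n : ℝ)⁻¹
  map_one' := by norm_num
  map_mul' m n := by push_cast; rw [mul_inv]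

lemma summable_recip_smooth (Y' : ℕ) : Summable (recip (Nat.smoothNumbers Y')) := by
  have h : ∀ {p : ℕ}, p.Prime → ‖recipHom p‖ < 1 := by
    intro p hp
    have h2 : (2:ℝ) ≤ p := by exact_mod_cast hp.two_le
    rw [recipHom]
    simp only [MonoidHom.coe_mk, OneHom.coe_mk, Real.norm_eq_abs]
    rw [abs_of_nonneg (by positivity)]
    rw [inv_lt_one_iff₀]
    right; linarith
  have := (EulerProduct.summable_and_hasSum_smoothNumbers_prod_primesBelow_geometric
    (f := recipHom) h Y').1
  rw [recip, ← summable_subtype_iff_indicator]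
  refine this.congr fun m => ?_
  simp only [recipHom, MonoidHom.coe_mk, OneHom.coe_mk, Real.norm_eq_abs, Function.comp]
  rw [abs_of_nonneg (by positivity)]

/-- smooth–rough coprimality -/
lemma coprime_of_split {Y : ℕ} {u v : ℕ} (hu : ∀ p, p.Prime → p ∣ u → p ≤ Y)
    (hv : ∀ p, p.Prime → p ∣ v → Y < p) : Nat.Coprime u v := by
  by_contra h
  obtain ⟨p, pp, pd⟩ := Nat.exists_prime_and_dvd h
  have h1 := hu p pp (pd.trans (Nat.gcd_dvd_left u v))
  have h2 := hv p pp (pd.trans (Nat.gcd_dvd_right u v))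
  omega

/-- decomposition into a smooth and a rough part -/
lemma exists_smooth_rough (Y : ℕ) : ∀ n : ℕ, n ≠ 0 →
    ∃ u v : ℕ, n = u * v ∧ u ∈ Nat.smoothNumbers (Y+1) ∧
      (∀ p, p.Prime → p ∣ v → Y < p) := by
  intro n
  induction n using Nat.strong_induction_on with
  | _ n ih =>
    intro hn
    by_cases hrough : ∀ p, p.Prime → p ∣ n → Y < p
    · exact ⟨1, n, by rw [one_mul], Nat.mem_smoothNumbers'.mpr (fun p hp hpd => absurd (Nat.eq_one_of_dvd_one hpd) hp.ne_one), hrough⟩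
    · push_neg at hrough
      obtain ⟨p, pp, pdvd, ple⟩ := hrough
      obtain ⟨n', hn'⟩ := pdvd
      have hp1 : 1 < p := pp.one_lt
      have hn'0 : n' ≠ 0 := by rintro rfl; simp at hn'; exact hn hn'
      have hn'lt : n' < n := by
        rw [hn']; calc n' = 1 * n' := (one_mul n').symm
          _ < p * n' := by
            exact (Nat.mul_lt_mul_right (Nat.pos_of_ne_zero hn'0)).mpr hp1
      obtain ⟨u, v, huv, hu, hv⟩ := ih n' hn'lt hn'0
      refine ⟨p * u, v, ?_, ?_, hv⟩
      · rw [hn', huv, mul_assoc]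
      · apply Nat.mul_mem_smoothNumbers ?_ hu
        rw [Nat.mem_smoothNumbers']
        intro q hq hqp
        have := (Nat.prime_dvd_prime_iff_eq hq pp).mp hqp
        omega

/-- rough numbers in the support of ν -/
def MSet (ν : ArithmeticFunction ℂ) (Y : ℕ) : Set ℕ :=
  {m : ℕ | ν m ≠ 0 ∧ ∀ p, p.Prime → p ∣ m → Y < p}

/-- bad rough numbers -/
def BadSet (f : ArithmeticFunction ℂ) (ν : ArithmeticFunction ℂ) (a Y : ℕ) : Set ℕ :=
  {m : ℕ | ∃ d1 d2 : ℕ, d1 ∣ a ∧ d2 ≠ 1 ∧ f (d1*d2) ≠ 0 ∧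
      (∀ p, p.Prime → p ∣ d2 → Y < p) ∧ d2 ∣ m ∧ ν (m / d2) ≠ 0}


lemma term_vanish (ν f : ArithmeticFunction ℂ) (hν : ν.IsMultiplicative) {a Y : ℕ}
    (ha_min : ∀ x, f x ≠ 0 → a ≤ x) (ha_pos : 0 < a) (hYa : a ≤ Y) {m : ℕ}
    (hrough_m : ∀ p, p.Prime → p ∣ m → Y < p) (hm0 : m ≠ 0)
    (hnotbad : m ∉ BadSet f ν a Y) {de e : ℕ}
    (hde : de * e = a * m) (hda : de ≠ a) : f de * ν e = 0 := by
  by_contra hterm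
  obtain ⟨hfd, hνe⟩ := mul_ne_zero_iff.mp hterm
  have hd0 : de ≠ 0 := by rintro rfl; exact hfd (ArithmeticFunction.map_zero)
  obtain ⟨d1, d2, hd12, hd1sm, hd2r⟩ := exists_smooth_rough Y de hd0
  have hd1le : ∀ p, p.Prime → p ∣ d1 → p ≤ Y := by
    intro p hp hpd
    have := Nat.mem_smoothNumbers'.mp hd1sm p hp hpd
    omega
  have hdam : de ∣ a * m := ⟨e, hde.symm⟩
  have cop1 : Nat.Coprime d1 m := coprime_of_split hd1le hrough_m
  have hd1a : d1 ∣ a := cop1.dvd_of_dvd_mul_right ((Dvd.intro d2 hd12.symm).trans hdam)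
  have cop2 : Nat.Coprime d2 a :=
    (coprime_of_split (fun p hp hpd => le_trans (Nat.le_of_dvd ha_pos hpd) hYa) hd2r).symm
  have hd2m : d2 ∣ m := cop2.dvd_of_dvd_mul_left ((Dvd.intro_left d1 hd12.symm).trans hdam)
  obtain ⟨a', ha'⟩ := hd1a
  obtain ⟨m', hm'⟩ := hd2m
  have hd120 : d1 * d2 ≠ 0 := by rw [← hd12]; exact hd0
  have he' : e = a' * m' := by
    rw [hd12, ha', hm'] at hde
    have h2 : d1 * d2 * e = d1 * d2 * (a' * m') := by rw [hde]; ring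
    exact Nat.eq_of_mul_eq_mul_left (Nat.pos_of_ne_zero hd120) h2
  have ha'up : ∀ p, p.Prime → p ∣ a' → p ≤ Y := by
    intro p hp hpd
    have : p ∣ a := hpd.trans ⟨d1, by rw [ha']; ring⟩
    exact le_trans (Nat.le_of_dvd ha_pos this) hYa
  have hm'dvd : m' ∣ m := ⟨d2, by rw [hm']; ring⟩
  have hm'up : ∀ p, p.Prime → p ∣ m' → Y < p := fun p hp hpd =>
    hrough_m p hp (hpd.trans hm'dvd)
  have hνe' : ν e = ν a' * ν m' := by
    rw [he']
    exact hν.map_mul_of_coprime (coprime_of_split ha'up hm'up)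
  have hνm' : ν m' ≠ 0 := by
    intro h; rw [hνe', h, mul_zero] at hνe; exact hνe rfl
  by_cases hd2_1 : d2 = 1
  · have hdvd : de ∣ a := by rw [hd12, hd2_1, mul_one]; exact ⟨a', ha'⟩
    have h1 : a ≤ de := ha_min de hfd
    have h2 : de ≤ a := Nat.le_of_dvd ha_pos hdvd
    omega
  · apply hnotbad
    refine ⟨d1, d2, ⟨a', ha'⟩, hd2_1, by rw [← hd12]; exact hfd, hd2r, ⟨m', hm'⟩, ?_⟩
    have hd2pos : 0 < d2 :=
      Nat.pos_of_ne_zero (by rintro rfl; rw [zero_mul] at hm'; exact hm0 hm')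
    have hq : m / d2 = m' := by rw [hm']; exact Nat.mul_div_cancel_left m' hd2pos
    rw [hq]; exact hνm'

/-- shifting into the support of g -/
lemma LS_shift {X B : Set ℕ} {a : ℕ} (ha_pos : 0 < a)
    (h : ∀ m, m ∈ X → a * m ∈ B) (N : ℕ) : LS X N ≤ a * LS B (a*N) := by
  have point : ∀ m ∈ Finset.Icc 1 N, recip X m ≤ a * recip B (a*m) := by
    intro m hm
    by_cases hmX : m ∈ X
    · rw [recip_of_mem hmX, recip_of_mem (h m hmX)]
      simp only [Finset.mem_Icc] at hm
      have hm0 : (0:ℝ) < m := by exact_mod_cast hm.1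
      have ha0 : (0:ℝ) < a := by exact_mod_cast ha_pos
      rw [show ((a*m : ℕ) : ℝ) = (a:ℝ) * m by push_cast; ring, mul_inv,
        ← mul_assoc, mul_inv_cancel₀ ha0.ne', one_mul]
    · rw [recip_of_not_mem hmX]
      exact mul_nonneg (by positivity) (recip_nonneg _ _)
  calc LS X N ≤ ∑ m ∈ Finset.Icc 1 N, a * recip B (a*m) := Finset.sum_le_sum point
    _ = a * ∑ m ∈ Finset.Icc 1 N, recip B (a*m) := by rw [Finset.mul_sum]
    _ ≤ a * LS B (a*N) := by
        apply mul_le_mul_of_nonneg_left _ (by positivity)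
        rw [show ∑ m ∈ Finset.Icc 1 N, recip B (a*m)
            = ∑ n ∈ (Finset.Icc 1 N).image (a * ·), recip B n from
          (Finset.sum_image (fun x _ y _ hxy => Nat.eq_of_mul_eq_mul_left ha_pos hxy)).symm]
        apply Finset.sum_le_sum_of_subset_of_nonneg
        · intro n hn
          simp only [Finset.mem_image, Finset.mem_Icc] at hn ⊢
          obtain ⟨m, hm, rfl⟩ := hn
          constructor
          · exact Nat.one_le_iff_ne_zero.mpr (Nat.mul_ne_zero ha_pos.ne' (by omega))
          · exact Nat.mul_le_mul_left a hm.2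
        · intro i _ _; exact recip_nonneg B i

/-- decomposition bound : LS S N ≤ (smooth sum) * LS M N -/
lemma LS_S_le (ν : ArithmeticFunction ℂ) (hν : ν.IsMultiplicative) (Y N : ℕ) :
    LS {n : ℕ | ν n ≠ 0} N ≤
      (∑' n, recip (Nat.smoothNumbers (Y+1)) n) * LS (MSet ν Y) N := by
  set S : Set ℕ := {n : ℕ | ν n ≠ 0} with hS
  set sm : Set ℕ := Nat.smoothNumbers (Y+1) with hsm
  set M : Set ℕ := MSet ν Y with hM
  have point : ∀ n ∈ Finset.Icc 1 N, recip S n ≤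
      ∑ q ∈ Finset.Icc 1 N ×ˢ Finset.Icc 1 N,
        (if q.1 * q.2 = n then recip sm q.1 * recip M q.2 else 0) := by
    intro n hn
    by_cases hnS : n ∈ S
    · simp only [Finset.mem_Icc] at hn
      have hn0 : n ≠ 0 := by omega
      obtain ⟨u, v, huv, hu, hv⟩ := exists_smooth_rough Y n hn0
      have hnn : ∀ q : ℕ × ℕ, 0 ≤ (if q.1 * q.2 = n then recip sm q.1 * recip M q.2 else 0) := by
        intro q
        by_cases h : q.1 * q.2 = n
        · rw [if_pos h]; exact mul_nonneg (recip_nonneg _ _) (recip_nonneg _ _)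
        · rw [if_neg h]
      have hu0 : u ≠ 0 := hu.1
      have hv0 : v ≠ 0 := by rintro rfl; rw [mul_zero] at huv; exact hn0 huv
      have hcop : Nat.Coprime u v := by
        apply coprime_of_split _ hv
        intro p hp hpd
        have := Nat.mem_smoothNumbers'.mp hu p hp hpd
        omega
      have hsplit : ν n = ν u * ν v := by rw [huv]; exact hν.map_mul_of_coprime hcop
      have hνv : ν v ≠ 0 := by
        intro h; exact hnS (by rw [hsplit, h, mul_zero])
      have hvM : v ∈ M := ⟨hνv, hv⟩
      have humem : u ∈ Finset.Icc 1 N := by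
        simp only [Finset.mem_Icc]
        refine ⟨Nat.one_le_iff_ne_zero.mpr hu0, le_trans (Nat.le_of_dvd (by omega) ⟨v, huv⟩) hn.2⟩
      have hvmem : v ∈ Finset.Icc 1 N := by
        simp only [Finset.mem_Icc]
        refine ⟨Nat.one_le_iff_ne_zero.mpr hv0,
          le_trans (Nat.le_of_dvd (by omega) ⟨u, by rw [huv]; ring⟩) hn.2⟩
      have hmem : (u, v) ∈ Finset.Icc 1 N ×ˢ Finset.Icc 1 N :=
        Finset.mem_product.mpr ⟨humem, hvmem⟩
      have hterm : (if u * v = n then recip sm u * recip M v else 0)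
          = recip S n := by
        rw [if_pos huv.symm, recip_of_mem (by exact hu), recip_of_mem hvM, recip_of_mem hnS,
          huv]
        push_cast
        rw [mul_inv]
      calc recip S n = _ := hterm.symm
        _ ≤ _ := Finset.single_le_sum (f := fun q : ℕ × ℕ =>
            if q.1 * q.2 = n then recip sm q.1 * recip M q.2 else 0)
            (fun q _ => hnn q) hmem
    · rw [recip_of_not_mem hnS]
      apply Finset.sum_nonneg
      intro q _
      by_cases h : q.1 * q.2 = n
      · rw [if_pos h]; exact mul_nonneg (recip_nonneg _ _) (recip_nonneg _ _)
      · rw [if_neg h]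
  calc LS S N ≤ ∑ n ∈ Finset.Icc 1 N, ∑ q ∈ Finset.Icc 1 N ×ˢ Finset.Icc 1 N,
        (if q.1 * q.2 = n then recip sm q.1 * recip M q.2 else 0) :=
        Finset.sum_le_sum point
    _ = ∑ q ∈ Finset.Icc 1 N ×ˢ Finset.Icc 1 N, ∑ n ∈ Finset.Icc 1 N,
        (if q.1 * q.2 = n then recip sm q.1 * recip M q.2 else 0) := Finset.sum_comm
    _ ≤ ∑ q ∈ Finset.Icc 1 N ×ˢ Finset.Icc 1 N, recip sm q.1 * recip M q.2 := by
        apply Finset.sum_le_sum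
        intro q _
        rw [Finset.sum_ite_eq (Finset.Icc 1 N) (q.1*q.2)
          (fun _ => recip sm q.1 * recip M q.2)]
        by_cases h : q.1*q.2 ∈ Finset.Icc 1 N
        · rw [if_pos h]
        · rw [if_neg h]; exact mul_nonneg (recip_nonneg _ _) (recip_nonneg _ _)
    _ = LS sm N * LS M N := by
        rw [LS, LS, Finset.sum_mul_sum, Finset.sum_product]
    _ ≤ (∑' n, recip sm n) * LS M N := by
        apply mul_le_mul_of_nonneg_right _ (LS_nonneg M N)
        exact LS_le_tsum (summable_recip_smooth (Y+1)) N

lemma mem_MSet {ν : ArithmeticFunction ℂ} {Y m : ℕ} :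
    m ∈ MSet ν Y ↔ (ν m ≠ 0 ∧ ∀ p, p.Prime → p ∣ m → Y < p) := Iff.rfl

lemma mem_BadSet {f ν : ArithmeticFunction ℂ} {a Y m : ℕ} :
    m ∈ BadSet f ν a Y ↔ (∃ d1 d2 : ℕ, d1 ∣ a ∧ d2 ≠ 1 ∧ f (d1*d2) ≠ 0 ∧
      (∀ p, p.Prime → p ∣ d2 → Y < p) ∧ d2 ∣ m ∧ ν (m / d2) ≠ 0) := Iff.rfl

lemma sum_sum_mul (c : ℝ) {s t : Finset ℕ} (h : ℕ → ℝ) {k : ℕ → ℝ} :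
    ∑ x ∈ s, ∑ y ∈ t, c * (h x * k y) = c * ((∑ x ∈ s, h x) * (∑ y ∈ t, k y)) := by
  rw [Finset.sum_mul_sum, Finset.mul_sum]
  exact Finset.sum_congr rfl fun x _ => by rw [Finset.mul_sum]

set_option maxHeartbeats 800000 in
lemma bad_bound (f ν : ArithmeticFunction ℂ) {a Y : ℕ} (ha_pos : 0 < a) (N : ℕ) :
    LS (MSet ν Y ∩ BadSet f ν a Y) N ≤
      ∑ d1 ∈ a.divisors, (d1:ℝ) *
        ((∑ x ∈ Finset.Icc 1 (a*N), if Y < x then recip {n : ℕ | f n ≠ 0} x else 0) *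
          LS (MSet ν Y) N) := by
  classical
  set A : Set ℕ := {n : ℕ | f n ≠ 0} with hA
  set M : Set ℕ := MSet ν Y with hM
  set P3 : Finset (ℕ × ℕ × ℕ) := a.divisors ×ˢ (Finset.Icc 1 (a*N) ×ˢ Finset.Icc 1 N)
    with hP3
  set V : ℕ → ℕ × ℕ × ℕ → ℝ := fun m t =>
    if (Y < t.2.1 ∧ t.1 ∣ t.2.1 ∧ m = (t.2.1 / t.1) * t.2.2) then
      (t.1:ℝ) * (recip A t.2.1 * recip M t.2.2) else 0 with hV
  set W : ℕ × ℕ × ℕ → ℝ := fun t =>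
    (t.1:ℝ) * ((if Y < t.2.1 then recip A t.2.1 else 0) * recip M t.2.2) with hW
  have hWnn : ∀ t, 0 ≤ W t := by
    intro t
    apply mul_nonneg (by positivity)
    apply mul_nonneg _ (recip_nonneg _ _)
    by_cases h : Y < t.2.1
    · rw [if_pos h]; exact recip_nonneg _ _
    · rw [if_neg h]
  have hVnn : ∀ m t, 0 ≤ V m t := by
    intro m t
    by_cases h : (Y < t.2.1 ∧ t.1 ∣ t.2.1 ∧ m = (t.2.1 / t.1) * t.2.2)
    · rw [hV]; simp only []
      rw [if_pos h]
      exact mul_nonneg (by positivity) (mul_nonneg (recip_nonneg _ _) (recip_nonneg _ _))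
    · rw [hV]; simp only []
      rw [if_neg h]
  have claimA : ∀ m ∈ Finset.Icc 1 N, recip (M ∩ BadSet f ν a Y) m ≤ ∑ t ∈ P3, V m t := by
    intro m hm
    by_cases hmB : m ∈ M ∩ BadSet f ν a Y
    · simp only [Finset.mem_Icc] at hm
      obtain ⟨hmM, hmBad⟩ := hmB
      obtain ⟨hνm, hrough⟩ := hmM
      obtain ⟨d1, d2, hd1a, hd21, hfx, hd2r, hd2m, hνq⟩ := hmBad
      have hm0 : m ≠ 0 := by rintro rfl; exact hνm (ArithmeticFunction.map_zero)
      have hd20 : d2 ≠ 0 := by rintro rfl; exact hm0 (zero_dvd_iff.mp hd2m)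
      have hd10 : d1 ≠ 0 := by rintro rfl; exact ha_pos.ne' (zero_dvd_iff.mp hd1a)
      set m' := m / d2 with hm'def
      have hm' : m = d2 * m' := by rw [hm'def, Nat.mul_div_cancel' hd2m]
      have hm'0 : m' ≠ 0 := by rintro h; rw [h, mul_zero] at hm'; exact hm0 hm'
      set x := d1 * d2 with hxdef
      have hx0 : x ≠ 0 := Nat.mul_ne_zero hd10 hd20
      have hd2x : d2 ∣ x := dvd_mul_left d2 d1
      have hYx : Y < x := by
        obtain ⟨p, pp, pd⟩ := Nat.exists_prime_and_dvd hd21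
        have h1 := hd2r p pp pd
        have h2 := Nat.le_of_dvd (Nat.pos_of_ne_zero hd20) pd
        have h3 := Nat.le_of_dvd (Nat.pos_of_ne_zero hx0) hd2x
        omega
      have hxd1 : x / d1 = d2 := by
        rw [hxdef]; exact Nat.mul_div_cancel_left d2 (Nat.pos_of_ne_zero hd10)
      have htmem : (d1, x, m') ∈ P3 := by
        rw [hP3]
        refine Finset.mem_product.mpr ⟨Nat.mem_divisors.mpr ⟨hd1a, ha_pos.ne'⟩,
          Finset.mem_product.mpr ⟨?_, ?_⟩⟩
        · simp only [Finset.mem_Icc]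
          constructor
          · exact Nat.one_le_iff_ne_zero.mpr hx0
          · exact Nat.mul_le_mul (Nat.le_of_dvd ha_pos hd1a)
              (le_trans (Nat.le_of_dvd (Nat.pos_of_ne_zero hm0) hd2m) hm.2)
        · simp only [Finset.mem_Icc]
          exact ⟨Nat.one_le_iff_ne_zero.mpr hm'0,
            le_trans (Nat.le_of_dvd (Nat.pos_of_ne_zero hm0) (Nat.div_dvd_of_dvd hd2m)) hm.2⟩
      have hm'M : m' ∈ M :=
        mem_MSet.mpr ⟨hνq, fun p hp hpd => hrough p hp (hpd.trans (Nat.div_dvd_of_dvd hd2m))⟩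
      have hxA : x ∈ A := hfx
      have hval : V m (d1, x, m') = recip (M ∩ BadSet f ν a Y) m := by
        rw [hV]; simp only []
        rw [if_pos ⟨hYx, dvd_mul_right d1 d2, by rw [hxd1]; exact hm'⟩]
        rw [recip_of_mem hxA, recip_of_mem hm'M,
          recip_of_mem (Set.mem_inter (mem_MSet.mpr ⟨hνm, hrough⟩)
            (mem_BadSet.mpr ⟨d1, d2, hd1a, hd21, hfx, hd2r, hd2m, hνq⟩))]
        have c1 : ((x:ℕ):ℝ) = (d1:ℝ) * (d2:ℝ) := by rw [hxdef]; push_cast; ring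
        have c2 : ((m:ℕ):ℝ) = (d2:ℝ) * (m':ℝ) := by rw [hm']; push_cast; ring
        rw [c1, c2]
        have hd10' : (d1:ℝ) ≠ 0 := by exact_mod_cast hd10
        have hd20' : (d2:ℝ) ≠ 0 := by exact_mod_cast hd20
        have hm'0' : (m':ℝ) ≠ 0 := by exact_mod_cast hm'0
        field_simp
      rw [← hval]
      exact Finset.single_le_sum (fun t _ => hVnn m t) htmem
    · rw [recip_of_not_mem hmB]
      exact Finset.sum_nonneg fun t _ => hVnn m t
  have claimB : ∀ t ∈ P3, ∀ m ∈ Finset.Icc 1 N,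
      V m t ≤ (if m = (t.2.1 / t.1) * t.2.2 then W t else 0) := by
    intro t _ m _
    by_cases hc : (Y < t.2.1 ∧ t.1 ∣ t.2.1 ∧ m = (t.2.1 / t.1) * t.2.2)
    · rw [hV]; simp only []
      rw [if_pos hc, if_pos hc.2.2, hW]; simp only []
      rw [if_pos hc.1]
    · rw [hV]; simp only []
      rw [if_neg hc]
      by_cases h : m = (t.2.1 / t.1) * t.2.2
      · rw [if_pos h]; exact hWnn t
      · rw [if_neg h]
  calc LS (M ∩ BadSet f ν a Y) N ≤ ∑ m ∈ Finset.Icc 1 N, ∑ t ∈ P3, V m t :=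
        Finset.sum_le_sum claimA
    _ = ∑ t ∈ P3, ∑ m ∈ Finset.Icc 1 N, V m t := Finset.sum_comm
    _ ≤ ∑ t ∈ P3, ∑ m ∈ Finset.Icc 1 N, (if m = (t.2.1 / t.1) * t.2.2 then W t else 0) :=
        Finset.sum_le_sum fun t ht => Finset.sum_le_sum (claimB t ht)
    _ ≤ ∑ t ∈ P3, W t := by
        apply Finset.sum_le_sum
        intro t _
        rw [Finset.sum_ite_eq' (Finset.Icc 1 N) ((t.2.1 / t.1) * t.2.2) (fun _ => W t)]
        by_cases h : (t.2.1 / t.1) * t.2.2 ∈ Finset.Icc 1 N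
        · rw [if_pos h]
        · rw [if_neg h]; exact hWnn t
    _ = ∑ d1 ∈ a.divisors, (d1:ℝ) *
        ((∑ x ∈ Finset.Icc 1 (a*N), if Y < x then recip A x else 0) * LS M N) := by
        simp only [hW, hP3, Finset.sum_product, LS]
        exact Finset.sum_congr rfl fun d1 _ => sum_sum_mul _ _

set_option maxHeartbeats 800000 in
lemma main_nonzero (ν f g : ArithmeticFunction ℂ) (hν : ν.IsMultiplicative)
    (hg : g = f * ν) {a Y : ℕ} (ha : f a ≠ 0)
    (ha_min : ∀ x, f x ≠ 0 → a ≤ x) (ha_pos : 0 < a) (hYa : a ≤ Y) {m : ℕ}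
    (hm : m ∈ MSet ν Y \ BadSet f ν a Y) : g (a * m) ≠ 0 := by
  obtain ⟨⟨hνm, hrough_m⟩, hnotbad⟩ := hm
  have hm0 : m ≠ 0 := by rintro rfl; exact hνm (ArithmeticFunction.map_zero)
  have ham0 : a * m ≠ 0 := Nat.mul_ne_zero ha_pos.ne' hm0
  have heq : ∑ p ∈ (a*m).divisorsAntidiagonal, f p.1 * ν p.2 = f a * ν m := by
    apply Finset.sum_eq_single (a, m)
    · rintro ⟨de, e⟩ hmem hne
      have hde : de * e = a * m := (Nat.mem_divisorsAntidiagonal.mp hmem).1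
      have hda : de ≠ a := by
        rintro rfl
        exact hne (by rw [Nat.eq_of_mul_eq_mul_left ha_pos hde])
      exact term_vanish ν f hν ha_min ha_pos hYa hrough_m hm0 hnotbad hde hda
    · intro hnm
      refine absurd ?_ hnm
      rw [Nat.mem_divisorsAntidiagonal]
      exact ⟨rfl, ham0⟩
  rw [hg, ArithmeticFunction.mul_apply, heq]
  exact mul_ne_zero ha hνm

theorem uncertainty_principle
    (ν : ArithmeticFunction ℂ) (hν : ν.IsMultiplicative)
    (hdens : ∃ d : ℝ, 0 < d ∧ HasDensity {n : ℕ | ν n ≠ 0} d)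
    (f g : ArithmeticFunction ℂ) (hg : g = f * ν)
    (hnz : ¬ (f = 0 ∧ g = 0)) :
    ¬ (Thin {n : ℕ | f n ≠ 0} ∧ Thin {n : ℕ | g n ≠ 0}) := by
  classical
  rintro ⟨hfThin, hgThin⟩
  obtain ⟨d, hd, hD⟩ := hdens
  have h0S : (0:ℕ) ∉ {n : ℕ | ν n ≠ 0} := by simp
  have hf0 : ∃ n, f n ≠ 0 := by
    by_contra h; push_neg at h
    have hf : f = 0 := ArithmeticFunction.ext fun n => by simp [h n]
    exact hnz ⟨hf, by rw [hg, hf, zero_mul]⟩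
  set a := Nat.find hf0 with ha_def
  have ha : f a ≠ 0 := Nat.find_spec hf0
  have ha_min : ∀ x, f x ≠ 0 → a ≤ x := fun x hx => Nat.find_min' hf0 hx
  have ha_pos : 0 < a := by
    rcases Nat.eq_zero_or_pos a with h | h
    · exact absurd (h ▸ ha) (by simp)
    · exact h
  have hsumA : Summable (recip {n : ℕ | f n ≠ 0}) := thin_summable hfThin
  have hsumB : Summable (recip {n : ℕ | g n ≠ 0}) := thin_summable hgThin
  set qA := ∑' n, recip {n : ℕ | f n ≠ 0} n with hqA
  set qB := ∑' n, recip {n : ℕ | g n ≠ 0} n with hqB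
  set sg : ℝ := ∑ d1 ∈ a.divisors, (d1:ℝ) with hsgdef
  have hsg : 0 < sg := by
    rw [hsgdef]
    apply Finset.sum_pos
    · intro i hi
      exact_mod_cast Nat.pos_of_mem_divisors hi
    · exact ⟨a, Nat.mem_divisors_self a ha_pos.ne'⟩
  have h0A : (0:ℕ) ∉ {n : ℕ | f n ≠ 0} := by simp
  -- choose Y
  have hYex : ∃ Y : ℕ, a ≤ Y ∧ qA - LS {n : ℕ | f n ≠ 0} Y < 1 / (2 * sg) := by
    have h1 : (0:ℝ) < 1 / (2*sg) := by positivity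
    have h2 := (LS_tendsto h0A hsumA).eventually
      (eventually_gt_nhds (show qA - 1/(2*sg) < qA by linarith))
    obtain ⟨Y, hY1, hY2⟩ := ((Filter.eventually_ge_atTop a).and h2).exists
    exact ⟨Y, hY1, by linarith⟩
  obtain ⟨Y, hYa, hYeps⟩ := hYex
  set ε := qA - LS {n : ℕ | f n ≠ 0} Y with hεdef
  have hε0 : (0:ℝ) ≤ ε := sub_nonneg.mpr (LS_le_tsum hsumA Y)
  have hεsg : sg * ε ≤ 1/2 := by
    have h1 : sg * ε < sg * (1/(2*sg)) := mul_lt_mul_of_pos_left hYeps hsg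
    have h2 : sg * (1/(2*sg)) = 1/2 := by field_simp
    linarith [h2 ▸ h1]
  -- tail bound
  have tail : ∀ Z : ℕ,
      ∑ x ∈ Finset.Icc 1 Z, (if Y < x then recip {n : ℕ | f n ≠ 0} x else 0) ≤ ε := by
    intro Z
    rw [← Finset.sum_filter]
    have hdisj : Disjoint (Finset.Icc 1 Y) ((Finset.Icc 1 Z).filter (Y < ·)) := by
      rw [Finset.disjoint_left]
      intro x hx hx'
      simp only [Finset.mem_Icc] at hx
      simp only [Finset.mem_filter] at hx'
      omega
    have hle : LS {n : ℕ | f n ≠ 0} Y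
        + ∑ x ∈ (Finset.Icc 1 Z).filter (Y < ·), recip {n : ℕ | f n ≠ 0} x ≤ qA := by
      rw [LS, ← Finset.sum_union hdisj]
      exact Summable.sum_le_tsum _ (fun i _ => recip_nonneg _ i) hsumA
    rw [hεdef]; linarith
  set Csm := ∑' n, recip (Nat.smoothNumbers (Y+1)) n with hCsm
  have hCsm0 : 0 ≤ Csm := tsum_nonneg fun n => recip_nonneg _ n
  have hqB0 : 0 ≤ qB := tsum_nonneg fun n => recip_nonneg _ n
  -- the uniform bound on LS S N
  have bound : ∀ N, LS {n : ℕ | ν n ≠ 0} N ≤ Csm * (2 * ((a:ℝ) * qB)) := by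
    intro N
    set M : Set ℕ := MSet ν Y with hM
    have h1 : LS {n : ℕ | ν n ≠ 0} N ≤ Csm * LS M N := LS_S_le ν hν Y N
    -- bad part
    have hbad : LS (M ∩ BadSet f ν a Y) N ≤ (1/2) * LS M N := by
      have hb1 := bad_bound f ν (a := a) (Y := Y) ha_pos N
      have hb2 : ∑ d1 ∈ a.divisors, (d1:ℝ) *
          ((∑ x ∈ Finset.Icc 1 (a*N), if Y < x then recip {n : ℕ | f n ≠ 0} x else 0) *
            LS M N) ≤ ∑ d1 ∈ a.divisors, (d1:ℝ) * (ε * LS M N) := by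
        apply Finset.sum_le_sum
        intro d1 _
        apply mul_le_mul_of_nonneg_left _ (by positivity)
        exact mul_le_mul_of_nonneg_right (tail (a*N)) (LS_nonneg M N)
      have hb3 : ∑ d1 ∈ a.divisors, (d1:ℝ) * (ε * LS M N) = sg * (ε * LS M N) := by
        rw [hsgdef, Finset.sum_mul]
      have hb4 : sg * (ε * LS M N) ≤ (1/2) * LS M N := by
        rw [← mul_assoc]
        exact mul_le_mul_of_nonneg_right hεsg (LS_nonneg M N)
      calc LS (M ∩ BadSet f ν a Y) N ≤ _ := hb1
        _ ≤ _ := hb2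
        _ = _ := hb3
        _ ≤ _ := hb4
    -- split M
    have hsplit : LS M N ≤ LS (M \ BadSet f ν a Y) N + LS (M ∩ BadSet f ν a Y) N := by
      rw [LS, LS, LS, ← Finset.sum_add_distrib]
      apply Finset.sum_le_sum
      intro n _
      by_cases hnM : n ∈ M
      · by_cases hnB : n ∈ BadSet f ν a Y
        · rw [recip_of_mem hnM, recip_of_mem (Set.mem_inter hnM hnB)]
          have := recip_nonneg (M \ BadSet f ν a Y) n
          linarith
        · rw [recip_of_mem hnM, recip_of_mem (Set.mem_diff_of_mem hnM hnB)]
          have := recip_nonneg (M ∩ BadSet f ν a Y) n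
          linarith
      · rw [recip_of_not_mem hnM]
        have := recip_nonneg (M \ BadSet f ν a Y) n
        have := recip_nonneg (M ∩ BadSet f ν a Y) n
        linarith
    have h2 : LS M N ≤ 2 * LS (M \ BadSet f ν a Y) N := by linarith
    -- shift into B
    have hmain : ∀ m, m ∈ M \ BadSet f ν a Y → a * m ∈ {n : ℕ | g n ≠ 0} := by
      intro m hm
      exact main_nonzero ν f g hν hg ha ha_min ha_pos hYa hm
    have h3 : LS (M \ BadSet f ν a Y) N ≤ (a:ℝ) * LS {n : ℕ | g n ≠ 0} (a*N) :=
      LS_shift ha_pos hmain N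
    have h4 : LS {n : ℕ | g n ≠ 0} (a*N) ≤ qB := LS_le_tsum hsumB _
    calc LS {n : ℕ | ν n ≠ 0} N ≤ Csm * LS M N := h1
      _ ≤ Csm * (2 * LS (M \ BadSet f ν a Y) N) := by
          exact mul_le_mul_of_nonneg_left h2 hCsm0
      _ ≤ Csm * (2 * ((a:ℝ) * LS {n : ℕ | g n ≠ 0} (a*N))) := by
          apply mul_le_mul_of_nonneg_left _ hCsm0
          linarith
      _ ≤ Csm * (2 * ((a:ℝ) * qB)) := by
          apply mul_le_mul_of_nonneg_left _ hCsm0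
          have ha0 : (0:ℝ) ≤ a := by positivity
          have := mul_le_mul_of_nonneg_left h4 ha0
          linarith
  exact not_summable_recip_of_density h0S hd hD (summable_of_LS_bounded h0S bound)
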